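/- With X, Y, and P as above, P is closed in the quotient topology on X × Y induced by the map (⨿_s ℝ_s) × (⨿_j ℝ_j) → X × Y. Consequently, the quotient topology on X × Y induced by this map is strictly finer than the product topology of the quotient topologies on X and Y. -/

import Mathlib

open Set Topology

def wedgeRel (I : Type*) (a b : Σ _ : I, ℝ) : Prop := a.2 = 0 ∧ b.2 = 0

def Wedge (I : Type*) : Type _ := Quot (wedgeRel I)

instance (I : Type*) : TopologicalSpace (Wedge I) :=
  inferInstanceAs (TopologicalSpace (Quot (wedgeRel I)))

def wedgePt {I : Type*} (i : I) (x : ℝ) : Wedge I := Quot.mk _ ⟨i, x⟩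

def Pset : Set (Wedge (ℕ+ → ℕ+) × Wedge ℕ+) :=
  {p | ∃ (s : ℕ+ → ℕ+) (j : ℕ+),
    p = (wedgePt s (1 / ((s j : ℕ) : ℝ)), wedgePt j (1 / ((s j : ℕ) : ℝ)))}

/-- The product of the two quotient maps from the disjoint unions. -/
def qmap : (Σ _ : ℕ+ → ℕ+, ℝ) × (Σ _ : ℕ+, ℝ) → Wedge (ℕ+ → ℕ+) × Wedge ℕ+ :=
  Prod.map (Quot.mk _) (Quot.mk _)

/-- The quotient topology on `X × Y` induced by `qmap`. -/
def tQ : TopologicalSpace (Wedge (ℕ+ → ℕ+) × Wedge ℕ+) :=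
  TopologicalSpace.coinduced qmap inferInstance

lemma wedge_mk_eq {I : Type*} (a b : Σ _ : I, ℝ) :
    Quot.mk (wedgeRel I) a = Quot.mk (wedgeRel I) b ↔ a = b ∨ (a.2 = 0 ∧ b.2 = 0) := by
  rw [Quot.eq]
  constructor
  · intro h
    induction h with
    | rel _ _ h => exact Or.inr h
    | refl => exact Or.inl rfl
    | symm _ _ _ ih => rcases ih with rfl | ⟨h1, h2⟩ <;> [exact Or.inl rfl; exact Or.inr ⟨h2, h1⟩]
    | trans a b c _ _ ih1 ih2 =>
      rcases ih1 with rfl | ⟨h1, h2⟩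
      · exact ih2
      · rcases ih2 with rfl | ⟨h3, h4⟩
        · exact Or.inr ⟨h1, h2⟩
        · exact Or.inr ⟨h1, h4⟩
  · rintro (rfl | ⟨h1, h2⟩)
    · exact Relation.EqvGen.refl _
    · exact Relation.EqvGen.rel _ _ ⟨h1, h2⟩

lemma wedgePt_eq_iff {I : Type*} (i i' : I) (x x' : ℝ) :
    wedgePt i x = wedgePt i' x' ↔ (⟨i, x⟩ : Σ _ : I, ℝ) = ⟨i', x'⟩ ∨ (x = 0 ∧ x' = 0) :=
  wedge_mk_eq _ _

lemma sj_pos (s : ℕ+ → ℕ+) (j : ℕ+) : (0 : ℝ) < 1 / ((s j : ℕ) : ℝ) := by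
  apply one_div_pos.mpr
  exact_mod_cast (s j).pos

lemma preimage_Pset : qmap ⁻¹' Pset =
    {p : (Σ _ : ℕ+ → ℕ+, ℝ) × (Σ _ : ℕ+, ℝ) |
      p.1.2 = 1 / ((p.1.1 p.2.1 : ℕ) : ℝ) ∧ p.2.2 = p.1.2} := by
  ext ⟨⟨s, x⟩, ⟨j, y⟩⟩
  simp only [mem_preimage, Pset, qmap, Prod.map_apply, Prod.map, mem_setOf_eq, Prod.mk.injEq, Prod.ext_iff]
  constructor
  · rintro ⟨s', j', h1, h2⟩
    have hpos := sj_pos s' j'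
    rw [wedgePt] at h1 h2
    rcases (wedge_mk_eq _ _).mp h1 with he | ⟨_, h0⟩
    · rcases (wedge_mk_eq _ _).mp h2 with he2 | ⟨_, h0⟩
      · obtain ⟨rfl, hx⟩ := Sigma.mk.inj_iff.mp he
        obtain ⟨rfl, hy⟩ := Sigma.mk.inj_iff.mp he2
        rw [eq_of_heq hx, eq_of_heq hy]
        exact ⟨rfl, rfl⟩
      · exact absurd h0.symm hpos.ne
    · exact absurd h0.symm hpos.ne
  · rintro ⟨hx, hy⟩
    exact ⟨s, j, by rw [hx]; rfl, by rw [hy, hx]; rfl⟩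

lemma isOpen_of_slices {O : Set ((Σ _ : ℕ+ → ℕ+, ℝ) × (Σ _ : ℕ+, ℝ))}
    (h : ∀ s j, IsOpen {xy : ℝ × ℝ | ((⟨s, xy.1⟩ : Σ _ : ℕ+ → ℕ+, ℝ), (⟨j, xy.2⟩ : Σ _ : ℕ+, ℝ)) ∈ O}) :
    IsOpen O := by
  have heq : O = ⋃ (s : ℕ+ → ℕ+), ⋃ (j : ℕ+),
      Prod.map (Sigma.mk s) (Sigma.mk j) ''
        {xy : ℝ × ℝ | ((⟨s, xy.1⟩ : Σ _ : ℕ+ → ℕ+, ℝ), (⟨j, xy.2⟩ : Σ _ : ℕ+, ℝ)) ∈ O} := by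
    ext ⟨⟨s, x⟩, ⟨j, y⟩⟩
    simp only [mem_iUnion, mem_image, mem_setOf_eq]
    constructor
    · intro hm
      exact ⟨s, j, (x, y), hm, rfl⟩
    · rintro ⟨s', j', ⟨a, b⟩, hm, he⟩
      rw [Prod.mk.injEq] at he
      obtain ⟨h1, h2⟩ := he
      obtain ⟨rfl, ha⟩ := Sigma.mk.inj_iff.mp h1
      obtain ⟨rfl, hb⟩ := Sigma.mk.inj_iff.mp h2
      rw [← eq_of_heq ha, ← eq_of_heq hb]
      exact hm
  rw [heq]
  exact isOpen_iUnion fun s => isOpen_iUnion fun j =>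
    (isOpenMap_sigmaMk.prodMap isOpenMap_sigmaMk) _ (h s j)

lemma Pset_closed_tQ : IsClosed[tQ] Pset := by
  rw [← @isOpen_compl_iff _ _ tQ]
  show IsOpen[TopologicalSpace.coinduced qmap inferInstance] Psetᶜ
  rw [isOpen_coinduced]
  rw [preimage_compl, preimage_Pset]
  apply isOpen_of_slices
  intro s j
  have : {xy : ℝ × ℝ | ((⟨s, xy.1⟩ : Σ _ : ℕ+ → ℕ+, ℝ), (⟨j, xy.2⟩ : Σ _ : ℕ+, ℝ)) ∈
      {p : (Σ _ : ℕ+ → ℕ+, ℝ) × (Σ _ : ℕ+, ℝ) |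
        p.1.2 = 1 / ((p.1.1 p.2.1 : ℕ) : ℝ) ∧ p.2.2 = p.1.2}ᶜ} =
      {xy : ℝ × ℝ | xy.1 = 1 / ((s j : ℕ) : ℝ) ∧ xy.2 = xy.1}ᶜ := by
    ext ⟨a, b⟩; simp
  rw [this]
  exact (IsClosed.inter (isClosed_eq continuous_fst continuous_const)
    (isClosed_eq continuous_snd continuous_fst)).isOpen_compl

lemma continuous_wedgePt {I : Type*} (i : I) : Continuous (wedgePt i : ℝ → Wedge I) := by
  show Continuous fun x : ℝ => Quot.mk (wedgeRel I) ⟨i, x⟩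
  exact continuous_quot_mk.comp continuous_sigmaMk

lemma Pset_compl_not_open : ¬ IsOpen Psetᶜ := by
  intro hopen
  set z : Wedge (ℕ+ → ℕ+) × Wedge ℕ+ := (wedgePt (fun _ => 1) 0, wedgePt 1 0) with hz
  have hzP : z ∉ Pset := by
    rintro ⟨s, j, hzeq⟩
    have := congrArg Prod.fst hzeq
    simp only [hz] at this
    rcases (wedgePt_eq_iff _ _ _ _).mp this with he | ⟨_, h0⟩
    · have := (Sigma.mk.inj_iff.mp he).2
      exact absurd (eq_of_heq this).symm (sj_pos s j).ne'
    · exact absurd h0.symm (sj_pos s j).ne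
  obtain ⟨U, V, hU, hV, hzU, hzV, hUV⟩ := isOpen_prod_iff.mp hopen z.1 z.2 hzP
  -- basepoint lies in each copy
  have hbase : ∀ (i : ℕ+), wedgePt i (0 : ℝ) = z.2 := fun i =>
    (wedgePt_eq_iff _ _ _ _).mpr (Or.inr ⟨rfl, rfl⟩)
  -- build s
  have hWV : ∀ j : ℕ+, ∃ ε > 0, ∀ x : ℝ, |x| < ε → wedgePt j x ∈ V := by
    intro j
    have hop : IsOpen (wedgePt j ⁻¹' V) := hV.preimage (continuous_wedgePt j)
    have h0 : (0 : ℝ) ∈ wedgePt j ⁻¹' V := by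
      simp only [mem_preimage, hbase j]; exact hzV
    obtain ⟨ε, hε, hball⟩ := Metric.isOpen_iff.mp hop 0 h0
    exact ⟨ε, hε, fun x hx => hball (by simpa [Real.dist_eq] using hx)⟩
  choose ε hε hεV using hWV
  choose n hn using fun j => exists_nat_one_div_lt (hε j)
  set s : ℕ+ → ℕ+ := fun j => max ⟨n j + 1, Nat.succ_pos _⟩ j with hs
  have hV' : ∀ j : ℕ+, wedgePt j (1 / ((s j : ℕ) : ℝ)) ∈ V := by
    intro j
    apply hεV j
    have hpos := sj_pos s j
    rw [abs_of_pos hpos]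
    have hle : ((n j : ℝ) + 1) ≤ ((s j : ℕ) : ℝ) := by
      have : (⟨n j + 1, Nat.succ_pos _⟩ : ℕ+) ≤ s j := le_max_left _ _
      have := (PNat.coe_le_coe _ _).mpr this
      push_cast at this ⊢
      exact_mod_cast this
    calc 1 / ((s j : ℕ) : ℝ) ≤ 1 / ((n j : ℝ) + 1) := by
          apply one_div_le_one_div_of_le (by positivity) hle
      _ < ε j := hn j
  -- U side
  have hopU : IsOpen (wedgePt s ⁻¹' U) := hU.preimage (continuous_wedgePt s)
  have h0U : (0 : ℝ) ∈ wedgePt s ⁻¹' U := by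
    have : wedgePt s (0 : ℝ) = z.1 := (wedgePt_eq_iff _ _ _ _).mpr (Or.inr ⟨rfl, rfl⟩)
    simp only [mem_preimage, this]; exact hzU
  obtain ⟨δ, hδ, hballU⟩ := Metric.isOpen_iff.mp hopU 0 h0U
  obtain ⟨m, hm⟩ := exists_nat_one_div_lt hδ
  set j : ℕ+ := ⟨m + 1, Nat.succ_pos _⟩ with hj
  have hU' : wedgePt s (1 / ((s j : ℕ) : ℝ)) ∈ U := by
    apply hballU
    have hpos := sj_pos s j
    rw [Metric.mem_ball, Real.dist_eq, sub_zero, abs_of_pos hpos]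
    have hle : ((m : ℝ) + 1) ≤ ((s j : ℕ) : ℝ) := by
      have : j ≤ s j := le_max_right _ _
      have := (PNat.coe_le_coe _ _).mpr this
      have hj' : (j : ℕ) = m + 1 := rfl
      rw [hj'] at this
      exact_mod_cast this
    calc 1 / ((s j : ℕ) : ℝ) ≤ 1 / ((m : ℝ) + 1) := by
          apply one_div_le_one_div_of_le (by positivity) hle
      _ < δ := hm
  have hmem : (wedgePt s (1 / ((s j : ℕ) : ℝ)), wedgePt j (1 / ((s j : ℕ) : ℝ))) ∈ Pset :=
    ⟨s, j, rfl⟩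
  exact hUV (mk_mem_prod hU' (hV' j)) hmem

theorem stmt13 :
    IsClosed[tQ] Pset ∧
      tQ < (inferInstance : TopologicalSpace (Wedge (ℕ+ → ℕ+) × Wedge ℕ+)) := by
  have hcont : Continuous[_, _] qmap := continuous_quot_mk.prodMap continuous_quot_mk
  have hle : tQ ≤ (inferInstance : TopologicalSpace (Wedge (ℕ+ → ℕ+) × Wedge ℕ+)) := by
    show TopologicalSpace.coinduced qmap inferInstance ≤ _
    exact continuous_iff_coinduced_le.mp hcont
  refine ⟨Pset_closed_tQ, lt_of_le_of_ne hle ?_⟩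
  intro heq
  apply Pset_compl_not_open
  have := Pset_closed_tQ.isOpen_compl
  rw [heq] at this
  exact this
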